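/- arXiv:2102.08654 — 2 statements merged into one kernel-verified Lean document; each statement's English description precedes it below -/
import Mathlib

section
/- The number e is transcendental over ℚ. -/
open Polynomial intervalIntegral in
lemma herm_deriv (P : ℝ[X]) (x : ℝ) :
    HasDerivAt (fun y => Real.exp (-y) * (sumIDeriv P).eval y)
      (-(Real.exp (-x) * P.eval x)) x := by
  have h1 : HasDerivAt (fun y => Real.exp (-y)) (-Real.exp (-x)) x := by
    simpa using (hasDerivAt_neg x).exp
  have h2 := (sumIDeriv P).hasDerivAt x
  have := h1.mul h2
  refine this.congr_deriv ?_
  have hd : derivative (sumIDeriv P) = sumIDeriv P - P := by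
    have := sumIDeriv_eq_self_add P
    linear_combination (norm := ring_nf) -this
  rw [hd]
  simp [eval_sub]
  ring

open Polynomial in
lemma herm_integral (P : ℝ[X]) (t : ℝ) :
    Real.exp t * (sumIDeriv P).eval 0 - (sumIDeriv P).eval t
      = Real.exp t * ∫ x in (0:ℝ)..t, Real.exp (-x) * P.eval x := by
  have hint : ∫ x in (0:ℝ)..t, -(Real.exp (-x) * P.eval x)
      = Real.exp (-t) * (sumIDeriv P).eval t - Real.exp (-0) * (sumIDeriv P).eval 0 := by
    apply intervalIntegral.integral_eq_sub_of_hasDerivAt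
    · exact fun x _ => herm_deriv P x
    · apply Continuous.intervalIntegrable
      exact ((Real.continuous_exp.comp continuous_neg).mul P.continuous_aeval).neg
  rw [intervalIntegral.integral_neg] at hint
  have h : ∫ x in (0:ℝ)..t, Real.exp (-x) * P.eval x
      = Real.exp (-0) * (sumIDeriv P).eval 0 - Real.exp (-t) * (sumIDeriv P).eval t := by
    linarith
  rw [h, mul_sub]
  congr 1
  · simp
  · rw [Real.exp_neg, ← mul_assoc, mul_inv_cancel₀ (Real.exp_ne_zero t), one_mul]

open Polynomial in
lemma herm_bound (P : ℝ[X]) (t M : ℝ) (ht : 0 ≤ t)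
    (hM : ∀ x ∈ Set.Icc (0:ℝ) t, |P.eval x| ≤ M) :
    |Real.exp t * (sumIDeriv P).eval 0 - (sumIDeriv P).eval t| ≤ Real.exp t * (t * M) := by
  rw [herm_integral, abs_mul, abs_of_pos (Real.exp_pos t)]
  refine mul_le_mul_of_nonneg_left ?_ (Real.exp_pos t).le
  have h := intervalIntegral.norm_integral_le_of_norm_le_const
    (f := fun x => Real.exp (-x) * P.eval x) (a := 0) (b := t) (C := M) ?_
  · rw [Real.norm_eq_abs] at h
    calc |∫ x in (0:ℝ)..t, Real.exp (-x) * P.eval x| ≤ M * |t - 0| := h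
      _ = t * M := by rw [sub_zero, abs_of_nonneg ht]; ring
  · intro x hx
    rw [Set.uIoc_of_le ht] at hx
    rw [Real.norm_eq_abs, abs_mul, abs_of_pos (Real.exp_pos _)]
    calc Real.exp (-x) * |P.eval x| ≤ 1 * M := by
          apply mul_le_mul
          · rw [Real.exp_le_one_iff]; linarith [hx.1]
          · exact hM x ⟨hx.1.le, hx.2⟩
          · positivity
          · norm_num
      _ = M := one_mul M

open Polynomial Finset

noncomputable def hermPoly (n q : ℕ) : ℤ[X] :=
  X ^ (q - 1) * ∏ k ∈ Finset.range n, (X - C ((k : ℤ) + 1)) ^ q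

lemma hermPoly_map_self (n q : ℕ) :
    (hermPoly n q).map (algebraMap ℤ ℤ) = hermPoly n q := by
  simp [algebraMap_int_eq, Polynomial.map_id]

lemma aeval_int (p : ℤ[X]) (i : ℤ) : aeval i p = p.eval i := by
  rw [aeval_def, eval₂_eq_eval_map, algebraMap_int_eq]
  simp [Polynomial.map_id]

/-- For `1 ≤ i ≤ n`, `q!` divides `F(i)`. -/
lemma herm_dvd_eval {n q : ℕ} {i : ℕ} (hi : i ∈ Finset.range n) :
    ((q.factorial : ℤ)) ∣ (sumIDeriv (hermPoly n q)).eval ((i : ℤ) + 1) := by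
  obtain ⟨gp, -, hgp⟩ := Polynomial.aeval_sumIDeriv (A := ℤ) (hermPoly n q) q
  have hfac : (hermPoly n q).map (algebraMap ℤ ℤ)
      = (X - C ((i : ℤ) + 1)) ^ q *
        (X ^ (q - 1) * ∏ k ∈ (Finset.range n).erase i, (X - C ((k : ℤ) + 1)) ^ q) := by
    rw [hermPoly_map_self, hermPoly, ← Finset.mul_prod_erase _ _ hi]
    ring
  have := hgp ((i : ℤ) + 1) ⟨_, hfac⟩
  rw [aeval_int] at this
  rw [this, aeval_int, nsmul_eq_mul]
  exact Dvd.intro _ rfl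

lemma herm_eval_zero (n q : ℕ) (hq : 0 < q) :
    ∃ d : ℤ, (sumIDeriv (hermPoly n q)).eval 0
      = (q - 1).factorial * (∏ k ∈ Finset.range n, (-(k : ℤ) - 1) ^ q)
        + q.factorial * d := by
  obtain ⟨gp, -, hgp⟩ := Polynomial.aeval_sumIDeriv_of_pos (A := ℤ) (hermPoly n q) hq
    (fun a b h => by exact_mod_cast h)
  have hfac : (hermPoly n q).map (algebraMap ℤ ℤ)
      = (X - C (0 : ℤ)) ^ (q - 1) * ∏ k ∈ Finset.range n, (X - C ((k : ℤ) + 1)) ^ q := by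
    rw [hermPoly_map_self, hermPoly, map_zero, sub_zero]
  have := hgp (0 : ℤ) hfac
  rw [aeval_int] at this
  refine ⟨(aeval (0:ℤ)) gp, ?_⟩
  rw [this, nsmul_eq_mul, nsmul_eq_mul]
  congr 1
  rw [eval_prod]
  congr 1
  apply Finset.prod_congr rfl
  intro k _
  rw [eval_pow, eval_sub, eval_X, eval_C]
  ring_nf

lemma herm_not_dvd (n q : ℕ) (hq : q.Prime) (hn : n < q) :
    ¬ (q : ℤ) ∣ ∏ k ∈ Finset.range n, (-(k : ℤ) - 1) ^ q := by
  intro hdvd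
  have hqz : Prime (q : ℤ) := Int.prime_iff_natAbs_prime.mpr (by simpa using hq)
  obtain ⟨k, hk, hdk⟩ := (hqz.dvd_finset_prod_iff _).1 hdvd
  have h1 : (q : ℤ) ∣ (-(k : ℤ) - 1) := hqz.dvd_of_dvd_pow hdk
  have h2 : (q : ℤ) ∣ ((k : ℤ) + 1) := by
    have := h1.neg_right
    simpa [add_comm] using this
  have h3 : q ∣ (k + 1) := by exact_mod_cast h2
  have := Nat.le_of_dvd (Nat.succ_pos k) h3
  have := Finset.mem_range.1 hk
  omega

/-- Bound on `|eval x (hermPoly n q)|` (as a real polynomial) for `x ∈ [0, n]`. -/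
lemma herm_poly_bound (n q : ℕ) (hn : 1 ≤ n) (hq : 1 ≤ q) (x : ℝ)
    (hx : x ∈ Set.Icc (0:ℝ) (n:ℝ)) :
    |(((hermPoly n q).map (Int.castRingHom ℝ)).eval x)| ≤ ((n:ℝ) ^ (n + 1)) ^ q := by
  obtain ⟨hx0, hxn⟩ := hx
  have hmap : ((hermPoly n q).map (Int.castRingHom ℝ)).eval x
      = x ^ (q - 1) * ∏ k ∈ Finset.range n, (x - ((k : ℝ) + 1)) ^ q := by
    rw [hermPoly]
    push_cast [Polynomial.map_mul, Polynomial.map_pow, Polynomial.map_prod,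
      Polynomial.map_sub, map_X, map_C, eval_mul, eval_pow, eval_X, eval_prod,
      eval_sub, eval_C]
    norm_num
  rw [hmap, abs_mul, abs_pow, Finset.abs_prod]
  have hb1 : |x| ^ (q - 1) ≤ (n : ℝ) ^ (q - 1) := by
    apply pow_le_pow_left₀ (abs_nonneg x)
    rw [abs_of_nonneg hx0]; exact hxn
  have hb2 : ∀ k ∈ Finset.range n, |(x - ((k : ℝ) + 1)) ^ q| ≤ (n : ℝ) ^ q := by
    intro k hk
    rw [abs_pow]
    apply pow_le_pow_left₀ (abs_nonneg _)
    rw [abs_sub_le_iff]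
    have hk' : (k : ℝ) + 1 ≤ (n : ℝ) := by
      have := Finset.mem_range.1 hk
      exact_mod_cast Nat.succ_le_of_lt this
    have hk0 : (0:ℝ) ≤ (k : ℝ) := Nat.cast_nonneg k
    constructor <;> linarith
  calc |x| ^ (q - 1) * ∏ k ∈ Finset.range n, |(x - ((k : ℝ) + 1)) ^ q|
      ≤ (n : ℝ) ^ (q - 1) * ∏ k ∈ Finset.range n, (n : ℝ) ^ q := by
        apply mul_le_mul hb1
        · exact Finset.prod_le_prod (fun k _ => abs_nonneg _) hb2
        · exact Finset.prod_nonneg (fun k _ => abs_nonneg _)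
        · positivity
    _ = (n : ℝ) ^ (q - 1 + n * q) := by
        rw [Finset.prod_const, Finset.card_range, ← pow_mul, ← pow_add, mul_comm n q]
    _ ≤ (n : ℝ) ^ (q + n * q) := by
        apply pow_le_pow_right₀
        · exact_mod_cast hn
        · omega
    _ = ((n:ℝ) ^ (n + 1)) ^ q := by rw [← pow_mul]; ring_nf

lemma herm_cast (f : ℤ[X]) (i : ℕ) :
    (((sumIDeriv f).eval (i : ℤ) : ℤ) : ℝ)
      = (sumIDeriv (f.map (Int.castRingHom ℝ))).eval (i : ℝ) := by
  rw [sumIDeriv_map]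
  have h := Polynomial.eval_intCast_map (Int.castRingHom ℝ) (sumIDeriv f) (i:ℤ)
  push_cast at h
  exact h.symm

lemma herm_key (g : ℤ[X]) (n : ℕ) (hn1 : 1 ≤ n)
    (hsum : ∑ i ∈ Finset.range (n+1), (g.coeff i : ℝ) * Real.exp 1 ^ i = 0)
    (ha0 : g.coeff 0 ≠ 0)
    (q : ℕ) (hq : q.Prime) (hnq : n < q) (haq : (g.coeff 0).natAbs < q) :
    ((q-1).factorial : ℝ)
      ≤ ((∑ i ∈ Finset.range (n+1), |(g.coeff i : ℝ)|) * ((n:ℝ) * Real.exp n))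
        * (((n:ℝ)^(n+1)) ^ q) := by
  have hq1 : 1 ≤ q := hq.one_lt.le.trans' (by norm_num)
  set F : ℤ[X] := sumIDeriv (hermPoly n q) with hF
  set J : ℤ := ∑ i ∈ Finset.range (n+1), g.coeff i * F.eval (i : ℤ) with hJ
  -- Step 1 : (q-1)! ≤ |J|
  obtain ⟨d, hd⟩ := herm_eval_zero n q (by omega)
  set c : ℤ := ∏ k ∈ Finset.range n, (-(k : ℤ) - 1) ^ q with hc
  choose dd hdd using fun (i : ℕ) (hi : i ∈ Finset.range n) => herm_dvd_eval (q := q) hi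
  have hJfac : ∃ D : ℤ, J = (q-1).factorial * (g.coeff 0 * c + q * D) := by
    refine ⟨(∑ i ∈ Finset.attach (Finset.range n),
        g.coeff (i.1+1) * dd i.1 i.2) + g.coeff 0 * d, ?_⟩
    rw [hJ, Finset.sum_range_succ']
    have h1 : ∑ i ∈ Finset.range n, g.coeff (i+1) * F.eval ((i:ℤ)+1)
        = (q.factorial : ℤ) * ∑ i ∈ Finset.attach (Finset.range n),
            g.coeff (i.1+1) * dd i.1 i.2 := by
      rw [← Finset.sum_attach (Finset.range n) (fun i => g.coeff (i+1) * F.eval ((i:ℤ)+1)),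
        Finset.mul_sum]
      apply Finset.sum_congr rfl
      intro i _
      rw [hdd i.1 i.2]
      ring
    push_cast at h1 ⊢
    rw [h1, hd]
    have hfac : (q.factorial : ℤ) = q * (q-1).factorial := by
      rw_mod_cast [← Nat.mul_factorial_pred (by omega)]
    rw [hfac]
    ring
  obtain ⟨D, hJD⟩ := hJfac
  have hndvd : ¬ (q : ℤ) ∣ (g.coeff 0 * c + q * D) := by
    intro hdvd
    rw [add_comm] at hdvd
    have h1 : (q : ℤ) ∣ g.coeff 0 * c := (dvd_add_right ⟨D, rfl⟩).mp hdvd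
    have hqz : Prime (q : ℤ) := Int.prime_iff_natAbs_prime.mpr (by simpa using hq)
    rcases hqz.dvd_mul.1 h1 with h | h
    · have h2 : q ∣ (g.coeff 0).natAbs := by
        have := Int.natAbs_dvd_natAbs.2 h
        simpa using this
      have := Nat.le_of_dvd (Int.natAbs_pos.2 ha0) h2
      omega
    · exact herm_not_dvd n q hq hnq h
  have hKne : g.coeff 0 * c + q * D ≠ 0 := by
    intro h0
    exact hndvd (h0 ▸ dvd_zero _)
  have hJlow : ((q-1).factorial : ℤ) ≤ |J| := by
    rw [hJD, abs_mul, abs_of_nonneg (by positivity : (0:ℤ) ≤ ((q-1).factorial : ℤ))]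
    nlinarith [Int.one_le_abs hKne, (by exact_mod_cast Nat.factorial_pos (q-1) : (0:ℤ) < (q-1).factorial)]
  -- Step 2 : real bound on |J|
  set P : ℝ[X] := (hermPoly n q).map (Int.castRingHom ℝ) with hP
  set B : ℝ := (n:ℝ) ^ (n+1) with hBdef
  have hn1R : (1:ℝ) ≤ (n:ℝ) := by exact_mod_cast hn1
  have hB1 : (1:ℝ) ≤ B := one_le_pow₀ hn1R
  set FP : ℝ[X] := sumIDeriv P with hFP
  have hsum' : ∑ i ∈ Finset.range (n+1), (g.coeff i : ℝ) * Real.exp i = 0 := by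
    rw [← hsum]
    apply Finset.sum_congr rfl
    intro i _
    rw [← Real.exp_one_rpow (i:ℝ), ← Real.rpow_natCast (Real.exp 1) i]
  have hMb : ∀ i ∈ Finset.range (n+1),
      |Real.exp i * FP.eval 0 - FP.eval (i:ℝ)| ≤ Real.exp n * ((n:ℝ) * B ^ q) := by
    intro i hi
    have hin : (i:ℝ) ≤ (n:ℝ) := by
      exact_mod_cast Nat.lt_succ_iff.mp (Finset.mem_range.mp hi)
    have h := herm_bound P (i:ℝ) (B ^ q) (Nat.cast_nonneg i)
      (fun x hx => herm_poly_bound n q hn1 hq1 x ⟨hx.1, hx.2.trans hin⟩)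
    refine h.trans ?_
    have h1 : Real.exp i ≤ Real.exp n := Real.exp_le_exp.2 hin
    have h2 : (0:ℝ) < B ^ q := by positivity
    have h3 : (i:ℝ) * B ^ q ≤ (n:ℝ) * B ^ q := by nlinarith
    apply mul_le_mul h1 h3 (by positivity) (Real.exp_pos _).le
  have hJreal : (J:ℝ) = -∑ i ∈ Finset.range (n+1),
      (g.coeff i : ℝ) * (Real.exp i * FP.eval 0 - FP.eval (i:ℝ)) := by
    have key2 : -∑ i ∈ Finset.range (n+1),
        (g.coeff i : ℝ) * (Real.exp i * FP.eval 0 - FP.eval (i:ℝ))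
        = ∑ i ∈ Finset.range (n+1), ((g.coeff i : ℝ) * FP.eval (i:ℝ))
          - (∑ i ∈ Finset.range (n+1), (g.coeff i : ℝ) * Real.exp i) * FP.eval 0 := by
      rw [Finset.sum_mul, ← Finset.sum_sub_distrib, ← Finset.sum_neg_distrib]
      apply Finset.sum_congr rfl
      intro i _
      ring
    rw [key2, hsum', zero_mul, sub_zero, hJ]
    push_cast
    apply Finset.sum_congr rfl
    intro i _
    rw [herm_cast]
  have hJup : |(J:ℝ)| ≤ (∑ i ∈ Finset.range (n+1), |(g.coeff i : ℝ)|)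
      * (Real.exp n * ((n:ℝ) * B ^ q)) := by
    rw [hJreal, abs_neg]
    calc |∑ i ∈ Finset.range (n+1),
        (g.coeff i : ℝ) * (Real.exp i * FP.eval 0 - FP.eval (i:ℝ))|
        ≤ ∑ i ∈ Finset.range (n+1),
            |(g.coeff i : ℝ) * (Real.exp i * FP.eval 0 - FP.eval (i:ℝ))| :=
          Finset.abs_sum_le_sum_abs _ _
      _ ≤ ∑ i ∈ Finset.range (n+1),
            |(g.coeff i : ℝ)| * (Real.exp n * ((n:ℝ) * B ^ q)) := by
          apply Finset.sum_le_sum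
          intro i hi
          rw [abs_mul]
          exact mul_le_mul_of_nonneg_left (hMb i hi) (abs_nonneg _)
      _ = (∑ i ∈ Finset.range (n+1), |(g.coeff i : ℝ)|)
            * (Real.exp n * ((n:ℝ) * B ^ q)) := by rw [← Finset.sum_mul]
  have hcast : ((q-1).factorial : ℝ) ≤ |(J:ℝ)| := by
    rw [← Int.cast_abs]
    exact_mod_cast hJlow
  calc ((q-1).factorial : ℝ) ≤ |(J:ℝ)| := hcast
    _ ≤ (∑ i ∈ Finset.range (n+1), |(g.coeff i : ℝ)|)
        * (Real.exp n * ((n:ℝ) * B ^ q)) := hJup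
    _ = (∑ i ∈ Finset.range (n+1), |(g.coeff i : ℝ)|) * ((n:ℝ) * Real.exp n) * B ^ q := by
        ring

open Filter in
/-- Hermite (1873): `e` is transcendental over `ℚ`. -/
theorem e_transcendental : Transcendental ℚ (Real.exp 1) := by
  intro halg
  have halgZ : IsAlgebraic ℤ (Real.exp 1) := (IsFractionRing.isAlgebraic_iff ℤ ℚ ℝ).mpr halg
  obtain ⟨g0, hg0, hge⟩ := halgZ
  obtain ⟨g, hgfac, hgnd⟩ := g0.exists_eq_pow_rootMultiplicity_mul_and_not_dvd hg0 0
  have ha0 : g.coeff 0 ≠ 0 := by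
    intro h
    rw [C_0, sub_zero] at hgnd
    exact hgnd (X_dvd_iff.2 h)
  have hge' : Polynomial.aeval (Real.exp 1) g = 0 := by
    rw [hgfac, map_mul, map_pow] at hge
    rcases mul_eq_zero.1 hge with h | h
    · exfalso
      refine pow_ne_zero (g0.rootMultiplicity 0)
        (a := (Polynomial.aeval (Real.exp 1)) (X - C 0)) ?_ h
      simp [Real.exp_ne_zero]
    · exact h
  set n := g.natDegree with hn
  have hn1 : 1 ≤ n := by
    by_contra hcon
    have h0 : n = 0 := by omega
    have := Polynomial.eq_C_of_natDegree_eq_zero h0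
    rw [this, aeval_C, algebraMap_int_eq, eq_intCast, Int.cast_eq_zero] at hge'
    exact ha0 hge'
  have hsum : ∑ i ∈ Finset.range (n+1), (g.coeff i : ℝ) * Real.exp 1 ^ i = 0 := by
    rw [← hge', Polynomial.aeval_eq_sum_range]
    apply Finset.sum_congr rfl
    intro i _
    simp [zsmul_eq_mul]
  set SA : ℝ := ∑ i ∈ Finset.range (n+1), |(g.coeff i : ℝ)| with hSA
  set Cc : ℝ := SA * ((n:ℝ) * Real.exp n) with hCc
  set B : ℝ := (n:ℝ) ^ (n+1) with hB
  have hB1 : (1:ℝ) ≤ B := one_le_pow₀ (by exact_mod_cast hn1)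
  have htend : Tendsto (fun m : ℕ => Cc * B * (B ^ m / m.factorial)) atTop (nhds 0) := by
    have := FloorSemiring.tendsto_pow_div_factorial_atTop (K := ℝ) B
    simpa using this.const_mul (Cc * B)
  have hev : ∀ᶠ m : ℕ in atTop, Cc * B * (B ^ m / m.factorial) < 1 :=
    htend.eventually_lt_const (by norm_num)
  obtain ⟨N, hN⟩ := eventually_atTop.1 hev
  obtain ⟨q, hqge, hq⟩ := Nat.exists_infinite_primes
    (max (N+1) (max (n+1) ((g.coeff 0).natAbs + 1)))
  have h1 : N + 1 ≤ q := le_trans (le_max_left _ _) hqge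
  have h2 : n + 1 ≤ q := le_trans (le_trans (le_max_left _ _) (le_max_right _ _)) hqge
  have h3 : (g.coeff 0).natAbs + 1 ≤ q :=
    le_trans (le_trans (le_max_right _ _) (le_max_right _ _)) hqge
  have hkey := herm_key g n hn1 hsum ha0 q hq (by omega) (by omega)
  rw [← hSA, ← hCc, ← hB] at hkey
  have hfac0 : (0:ℝ) < ((q-1).factorial : ℝ) := by
    exact_mod_cast Nat.factorial_pos (q-1)
  have hm := hN (q-1) (by omega)
  have hBq : B ^ q = B * B ^ (q - 1) := by
    rw [← pow_succ']
    congr 1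
    omega
  have hm' : (Cc * B * B ^ (q-1)) / ((q-1).factorial : ℝ) < 1 := by
    rw [mul_div_assoc]
    exact hm
  have hlt : Cc * B ^ q < ((q-1).factorial : ℝ) := by
    have := (div_lt_one hfac0).mp hm'
    rw [hBq]
    nlinarith
  linarith
end

section
/- A sequence a : ℕ → A with values in a finite set A is k-automatic if and only if its k-kernel K_k(a) = { (a(kʳ·n + j))_{n≥0} : r ≥ 0, 0 ≤ j < kʳ } is a finite set of sequences. -/
/-- `a : ℕ → A` is `k`-automatic: there is a finite automaton (finite state set `S`,
initial state `init`, transition function `δ` reading base-`k` digits, output map `out`)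
computing `a n` from the base-`k` expansion of `n`. -/
def IsAutomatic {A : Type*} (k : ℕ) (a : ℕ → A) : Prop :=
  ∃ (S : Type) (_ : Fintype S) (init : S) (δ : S → ℕ → S) (out : S → A),
    ∀ n : ℕ, a n = out ((Nat.digits k n).foldl δ init)

/-- The `k`-kernel of the sequence `a`: the set of subsequences `n ↦ a (kʳ n + j)`
for `r ≥ 0` and `0 ≤ j < kʳ`. -/
def kernel {A : Type*} (k : ℕ) (a : ℕ → A) : Set (ℕ → A) :=
  {s | ∃ r j : ℕ, j < k ^ r ∧ s = fun n => a (k ^ r * n + j)}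

/-- Eilenberg's theorem: a sequence with values in a finite set is `k`-automatic if and
only if its `k`-kernel is finite. -/
theorem eilenberg {A : Type*} [Finite A] (k : ℕ) (hk : 2 ≤ k) (a : ℕ → A) :
    IsAutomatic k a ↔ (kernel k a).Finite := by
  have hkpos : 0 < k := by omega
  constructor
  · rintro ⟨S, _, init, δ, out, hout⟩
    have key : ∀ r j, j < k ^ r → ∀ s₀ : S, ∃ s : S, ∀ n, 1 ≤ n →
        (Nat.digits k (k ^ r * n + j)).foldl δ s₀ = (Nat.digits k n).foldl δ s := by
      intro r
      induction r with
      | zero =>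
        intro j hj s₀
        have : j = 0 := by simpa using hj
        subst this
        exact ⟨s₀, fun n _ => by simp⟩
      | succ r ih =>
        intro j hj s₀
        have hjk : j / k < k ^ r := by
          rw [Nat.div_lt_iff_lt_mul hkpos, ← pow_succ]; exact hj
        obtain ⟨s, hs⟩ := ih (j / k) hjk (δ s₀ (j % k))
        refine ⟨s, fun n hn => ?_⟩
        have harith : k ^ (r + 1) * n + j = k * (k ^ r * n + j / k) + j % k := by
          have := Nat.div_add_mod j k
          rw [pow_succ]
          ring_nf
          omega
        have hpos : 0 < k * (k ^ r * n + j / k) + j % k := by positivity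
        have hmod : (k * (k ^ r * n + j / k) + j % k) % k = j % k := by
          rw [Nat.mul_add_mod, Nat.mod_mod_of_dvd j dvd_rfl]
        have hdiv : (k * (k ^ r * n + j / k) + j % k) / k = k ^ r * n + j / k := by
          rw [Nat.mul_add_div hkpos, Nat.div_eq_of_lt (Nat.mod_lt _ hkpos), Nat.add_zero]
        rw [harith, Nat.digits_def' (by omega : 1 < k) hpos, hmod, hdiv]
        exact hs n hn
    have hsub : kernel k a ⊆ Set.range (fun p : S × A =>
        fun n => if n = 0 then p.2 else out ((Nat.digits k n).foldl δ p.1)) := by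
      rintro s ⟨r, j, hj, rfl⟩
      obtain ⟨st, hst⟩ := key r j hj init
      refine ⟨(st, a j), ?_⟩
      funext n
      cases n with
      | zero => simp
      | succ m =>
        simp only [Nat.succ_ne_zero, if_false]
        rw [hout, hst (m + 1) (Nat.succ_le_succ (Nat.zero_le m))]
    exact Set.Finite.subset (Set.finite_range _) hsub
  · intro hfin
    haveI : Fintype (kernel k a) := hfin.fintype
    set K := ↥(kernel k a) with hK
    have hainit : a ∈ kernel k a := ⟨0, 0, Nat.one_pos, by funext n; simp⟩
    -- transition on the kernel
    have hstep : ∀ (s : K) (d : ℕ), d < k → (fun n => s.1 (k * n + d)) ∈ kernel k a := by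
      rintro ⟨s, r, j, hj, rfl⟩ d hd
      refine ⟨r + 1, k ^ r * d + j, ?_, ?_⟩
      · calc k ^ r * d + j < k ^ r * d + k ^ r := by omega
          _ = k ^ r * (d + 1) := by ring
          _ ≤ k ^ r * k := Nat.mul_le_mul_left _ (by omega)
          _ = k ^ (r + 1) := (pow_succ k r).symm
      · funext n; simp only []; ring_nf
    let δ₀ : K → ℕ → K := fun s d => if h : d < k then ⟨fun n => s.1 (k * n + d), hstep s d h⟩ else s
    have keyb : ∀ (L : List ℕ), (∀ d ∈ L, d < k) → ∀ (s : K) (m : ℕ),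
        (L.foldl δ₀ s).1 m = s.1 (Nat.ofDigits k L + k ^ L.length * m) := by
      intro L
      induction L with
      | nil => intro _ s m; simp [Nat.ofDigits]
      | cons d L ih =>
        intro hL s m
        have hd : d < k := hL d List.mem_cons_self
        rw [List.foldl_cons, ih (fun x hx => hL x (List.mem_cons_of_mem d hx)) (δ₀ s d) m]
        simp only [δ₀, dif_pos hd]
        rw [Nat.ofDigits_cons, List.length_cons, pow_succ]
        ring_nf
    -- transport to Fin
    obtain ⟨N, e⟩ : ∃ N, Nonempty (K ≃ Fin N) := ⟨Fintype.card K, ⟨Fintype.equivFin K⟩⟩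
    obtain ⟨e⟩ := e
    refine ⟨Fin N, inferInstance, e ⟨a, hainit⟩,
      fun i d => e (δ₀ (e.symm i) d), fun i => (e.symm i).1 0, fun n => ?_⟩
    have hfold : ∀ (L : List ℕ) (s : K), L.foldl (fun i d => e (δ₀ (e.symm i) d)) (e s)
        = e (L.foldl δ₀ s) := by
      intro L
      induction L with
      | nil => intro s; rfl
      | cons d L ih => intro s; rw [List.foldl_cons, List.foldl_cons, Equiv.symm_apply_apply, ih]
    rw [hfold]
    simp only [Equiv.symm_apply_apply]
    have := keyb (Nat.digits k n) (fun d hd => Nat.digits_lt_base (by omega) hd) ⟨a, hainit⟩ 0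
    rw [this]
    simp [Nat.ofDigits_digits]
end
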